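/- arXiv:math/0511674 — 2 statements merged into one kernel-verified Lean document; each statement's English description precedes it below -/
import Mathlib

section
/- Let $\mathbf{u}$ be an infinite word over a finite alphabet with $r$ letters, and let $\sigma$ be a morphism of constant length $\ell \ge 2$ on this alphabet such that $\sigma(\mathbf{u}) = \mathbf{u}$ (i.e., $\mathbf{u}$ is a fixed point of $\sigma$). If $\mathbf{u}$ is not eventually periodic, then $\mathbf{u}$ satisfies Condition $(*)_{1+1/r}$: there exist sequences of finite words $(U_n)$, $(V_n)$ with $U_n V_n^{1+1/r}$ a prefix of $\mathbf{u}$, $|U_n|/|V_n| \le r-1$, and $|V_n| \to \infty$. -/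
open scoped BigOperators

/-- `L` is a prefix of the infinite word `a` (0-indexed). -/
def IsPrefixSeq {A : Type*} (a : ℕ → A) (L : List A) : Prop :=
  ∀ i, i < L.length → L.getD i (a 0) = a i

/-- The word `V^w` for a real exponent `w`. -/
noncomputable def wPow {A : Type*} (V : List A) (w : ℝ) : List A :=
  (List.replicate ⌊w⌋₊ V).flatten ++ V.take ⌈(w - (⌊w⌋₊ : ℝ)) * (V.length : ℝ)⌉₊

/-- The sequence `a` is eventually periodic. -/
def EvPeriodic {A : Type*} (a : ℕ → A) : Prop :=
  ∃ r s : ℕ, 0 < s ∧ ∀ k, r ≤ k → a (k + s) = a k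

/-- Condition `(*)_w` of Adamczewski–Bugeaud. -/
noncomputable def ConditionStar {A : Type*} (a : ℕ → A) (w : ℝ) : Prop :=
  ¬ EvPeriodic a ∧
  ∃ U V : ℕ → List A,
    (∀ n, IsPrefixSeq a (U n ++ wPow (V n) w)) ∧
    (∃ C : ℝ, ∀ n, ((U n).length : ℝ) ≤ C * ((V n).length : ℝ)) ∧
    (∀ n, 0 < (V n).length) ∧
    StrictMono fun n => (V n).length

/-- The subword complexity function: number of distinct factors of length `n`. -/
noncomputable def complexity {A : Type*} (a : ℕ → A) (n : ℕ) : ℕ :=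
  Set.ncard {L : List A | ∃ i : ℕ, L = (List.range n).map fun j => a (i + j)}

/-- The action of a morphism (substitution) on finite words. -/
def mapWord {A B : Type*} (φ : A → List B) (L : List A) : List B := L.flatMap φ

/-- `φ` is prolongable on the letter `a0`. -/
def Prolongable {A : Type*} (φ : A → List A) (a0 : A) : Prop :=
  ∃ W : List A, W ≠ [] ∧ φ a0 = a0 :: W ∧ ∀ k : ℕ, (mapWord φ)^[k] W ≠ []

lemma mapWord_append' {A B : Type*} (φ : A → List B) (L M : List A) :
    mapWord φ (L ++ M) = mapWord φ L ++ mapWord φ M := by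
  simp [mapWord]

lemma iter_append' {A : Type*} (φ : A → List A) (n : ℕ) (L M : List A) :
    (mapWord φ)^[n] (L ++ M) = (mapWord φ)^[n] L ++ (mapWord φ)^[n] M := by
  induction n generalizing L M with
  | zero => simp
  | succ n ih => simp [Function.iterate_succ_apply, mapWord_append', ih]

lemma mapWord_length' {A : Type*} (φ : A → List A) (ℓ : ℕ) (hφ : ∀ a, (φ a).length = ℓ)
    (L : List A) : (mapWord φ L).length = ℓ * L.length := by
  induction L with
  | nil => simp [mapWord]
  | cons a L ih => simp [mapWord] at ih ⊢; rw [hφ, ih]; ring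

lemma iter_length' {A : Type*} (φ : A → List A) (ℓ : ℕ) (hφ : ∀ a, (φ a).length = ℓ)
    (n : ℕ) (L : List A) : ((mapWord φ)^[n] L).length = ℓ ^ n * L.length := by
  induction n generalizing L with
  | zero => simp
  | succ n ih =>
    rw [Function.iterate_succ_apply, ih, mapWord_length' φ ℓ hφ]
    ring

lemma isPrefixSeq_eq' {A : Type*} (u : ℕ → A) (L : List A) (h : IsPrefixSeq u L) :
    L = (List.range L.length).map u := by
  apply List.ext_getElem (by simp)
  intro i h1 h2
  have := h i h1
  rw [List.getD_eq_getElem L (u 0) h1] at this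
  simpa using this

lemma isPrefixSeq_range' {A : Type*} (u : ℕ → A) (N : ℕ) :
    IsPrefixSeq u ((List.range N).map u) := by
  intro i hi
  simp at hi
  rw [List.getD_eq_getElem _ _ (by simpa using hi)]
  simp [hi]

lemma isPrefixSeq_of_prefix' {A : Type*} (u : ℕ → A) (L M : List A)
    (h : IsPrefixSeq u M) (hp : L <+: M) : IsPrefixSeq u L := by
  intro i hi
  rw [List.getD_eq_getElem L (u 0) hi, List.IsPrefix.getElem hp hi,
    ← List.getD_eq_getElem M (u 0) (hi.trans_le hp.length_le)]
  exact h i (hi.trans_le hp.length_le)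

lemma iter_prefix' {A : Type*} (u : ℕ → A) (σ : A → List A)
    (hfix : ∀ n : ℕ, IsPrefixSeq u (mapWord σ ((List.range n).map u)))
    (n : ℕ) (L : List A) (h : IsPrefixSeq u L) : IsPrefixSeq u ((mapWord σ)^[n] L) := by
  induction n generalizing L with
  | zero => simpa
  | succ n ih =>
    rw [Function.iterate_succ_apply]
    apply ih
    rw [isPrefixSeq_eq' u L h]
    exact hfix L.length

theorem stmt_5 {A : Type*} [Fintype A] (r : ℕ) (hr : Fintype.card A = r)
    (ℓ : ℕ) (hℓ : 2 ≤ ℓ) (σ : A → List A) (hσ : ∀ a : A, (σ a).length = ℓ)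
    (u : ℕ → A) (hfix : ∀ n : ℕ, IsPrefixSeq u (mapWord σ ((List.range n).map u)))
    (hnp : ¬ EvPeriodic u) :
    ∃ U V : ℕ → List A,
      (∀ n, 0 < (V n).length) ∧
      (∀ n, IsPrefixSeq u (U n ++ wPow (V n) (1 + 1 / (r : ℝ)))) ∧
      (∀ n, ((U n).length : ℝ) ≤ ((r : ℝ) - 1) * ((V n).length : ℝ)) ∧
      Filter.Tendsto (fun n => (V n).length) Filter.atTop Filter.atTop := by
  have hA : Nonempty A := ⟨u 0⟩
  have hr1 : 1 ≤ r := hr ▸ Fintype.card_pos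
  have hr2 : 2 ≤ r := by
    rcases eq_or_lt_of_le hr1 with h | h
    · exfalso
      have hs : Subsingleton A := by
        rw [← Fintype.card_le_one_iff_subsingleton, hr, ← h]
      exact hnp ⟨0, 1, one_pos, fun k _ => Subsingleton.elim _ _⟩
    · exact h
  have hr0 : (0 : ℝ) < (r : ℝ) := by exact_mod_cast (by omega : 0 < r)
  obtain ⟨i, j, hij, hjr, huij⟩ : ∃ i j : ℕ, i < j ∧ j ≤ r ∧ u i = u j := by
    have hcard : Fintype.card A < Fintype.card (Fin (r+1)) := by simp [hr]
    obtain ⟨x, y, hxy, h⟩ :=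
      Fintype.exists_ne_map_eq_of_card_lt (fun z : Fin (r+1) => u z) hcard
    rcases lt_or_gt_of_ne hxy with hlt | hlt
    · exact ⟨x, y, hlt, Nat.lt_succ_iff.mp y.isLt, h⟩
    · exact ⟨y, x, hlt, Nat.lt_succ_iff.mp x.isLt, h.symm⟩
  obtain ⟨e, hk⟩ : ∃ e : ℕ, j = i + (e + 1) := ⟨j - i - 1, by omega⟩
  set k : ℕ := e + 1 with hke
  have hkr : i + k ≤ r := by omega
  set T := mapWord σ with hT
  set seg : List A := (List.range k).map (fun t => u (i + t)) with hseg
  have hlenU : ∀ n, (T^[n] ((List.range i).map u)).length = ℓ ^ n * i := by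
    intro n; rw [hT, iter_length' σ ℓ hσ]; simp
  have hlenV : ∀ n, (T^[n] seg).length = ℓ ^ n * k := by
    intro n; rw [hT, iter_length' σ ℓ hσ]; simp [hseg]
  have hlen1 : ∀ n, (T^[n] [u i]).length = ℓ ^ n := by
    intro n; rw [hT, iter_length' σ ℓ hσ]; simp
  have hfl : ⌊(1 + 1 / (r : ℝ))⌋₊ = 1 := by
    rw [Nat.floor_eq_iff (by positivity)]
    constructor
    · push_cast
      have : (0 : ℝ) ≤ 1 / (r : ℝ) := by positivity
      linarith
    · have h1 : (1 : ℝ) / r < 1 := by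
        rw [div_lt_one hr0]; exact_mod_cast (by omega : 1 < r)
      push_cast; linarith
  have hw : ∀ V : List A,
      wPow V (1 + 1 / (r : ℝ)) = V ++ V.take ⌈(1 / (r : ℝ)) * (V.length : ℝ)⌉₊ := by
    intro V
    rw [wPow, hfl]
    norm_num
  refine ⟨fun n => T^[n] ((List.range i).map u), fun n => T^[n] seg, ?_, ?_, ?_, ?_⟩
  · intro n
    rw [hlenV]
    positivity
  · intro n
    have hjsplit : (List.range j).map u = (List.range i).map u ++ seg := by
      rw [hk, List.range_add, List.map_append, List.map_map, hseg]
      rfl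
    have hfull : (List.range (j+1)).map u = ((List.range i).map u ++ seg) ++ [u j] := by
      rw [List.range_succ, List.map_append, hjsplit]
      rfl
    have hP : IsPrefixSeq u (T^[n] ((List.range i).map u) ++ T^[n] seg ++ T^[n] [u i]) := by
      have h0 := iter_prefix' u σ hfix n _ (isPrefixSeq_range' u (j+1))
      rw [hfull, iter_append', iter_append', ← huij] at h0
      exact h0
    set m := ⌈(1 / (r : ℝ)) * (((T^[n] seg).length : ℕ) : ℝ)⌉₊ with hm
    have hmle : m ≤ ℓ ^ n := by
      rw [hm, Nat.ceil_le, hlenV]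
      have hkr' : (e : ℝ) + 1 ≤ (r : ℝ) := by exact_mod_cast (by omega : e + 1 ≤ r)
      have hp : (0 : ℝ) ≤ (ℓ : ℝ) ^ n := by positivity
      push_cast
      rw [div_mul_eq_mul_div, one_mul, div_le_iff₀ hr0]
      exact mul_le_mul_of_nonneg_left (by exact_mod_cast (by omega : k ≤ r)) hp
    have hsegcons : seg = [u i] ++ (List.range e).map (fun t => u (i + (t + 1))) := by
      rw [hseg, hke, List.range_succ_eq_map, List.map_cons, List.map_map]
      simp [Function.comp_def, Nat.succ_eq_add_one]
    have hVsp : T^[n] seg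
        = T^[n] [u i] ++ T^[n] ((List.range e).map (fun t => u (i + (t + 1)))) := by
      rw [hsegcons, iter_append']
    have htake : (T^[n] seg).take m = (T^[n] [u i]).take m := by
      rw [hVsp, List.take_append_of_le_length (by rw [hlen1]; exact hmle)]
    have hpre : (T^[n] seg).take m <+: T^[n] [u i] := by
      rw [htake]; exact List.take_prefix m _
    have hcat : ∀ (l : List A) {a b : List A}, a <+: b → l ++ a <+: l ++ b := by
      rintro l a b ⟨c, hc⟩
      exact ⟨c, by rw [List.append_assoc, hc]⟩
    refine isPrefixSeq_of_prefix' u _ _ hP ?_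
    rw [hw, List.append_assoc]
    exact hcat _ (hcat _ hpre)
  · intro n
    rw [hlenU, hlenV]
    have h1 : i ≤ (r - 1) * k := by
      calc i ≤ r - 1 := by omega
      _ ≤ (r - 1) * k := Nat.le_mul_of_pos_right _ (by omega)
    have hnat : ℓ ^ n * i ≤ (r - 1) * (ℓ ^ n * k) := by
      calc ℓ ^ n * i ≤ ℓ ^ n * ((r - 1) * k) := Nat.mul_le_mul_left _ h1
      _ = (r - 1) * (ℓ ^ n * k) := by ring
    calc ((ℓ ^ n * i : ℕ) : ℝ) ≤ (((r - 1) * (ℓ ^ n * k) : ℕ) : ℝ) := Nat.cast_le.mpr hnat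
    _ = ((r : ℝ) - 1) * ((ℓ ^ n * k : ℕ) : ℝ) := by
        rw [Nat.cast_mul, Nat.cast_sub hr1, Nat.cast_one]
  · simp only [hlenV]
    have h1 : Filter.Tendsto (fun n => ℓ ^ n) Filter.atTop Filter.atTop :=
      tendsto_pow_atTop_atTop_of_one_lt (by omega)
    exact Filter.tendsto_atTop_mono
      (fun n => Nat.le_mul_of_pos_right _ (by omega)) h1
end

section
/- Let $\kappa \ge 2$ and $n \ge 1$ be integers and let $\mathbf{u}$ be an infinite word over a finite alphabet such that some word $M$ of length $n$ occurs at positions $i$ and $j$ with $0 \le i < j \le \kappa n$ within the prefix of length $(\kappa+1)n$. Then there exist finite words $U, V$ with $U V^{1+1/(3\kappa+1)}$ a prefix of $\mathbf{u}$, $|U| \le \kappa n$, and $|V| \ge n/4$. -/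
open scoped BigOperators

theorem stmt_12 {A : Type*} (u : ℕ → A) (κ n : ℕ) (hκ : 2 ≤ κ) (hn : 1 ≤ n)
    (i j : ℕ) (hij : i < j) (hj : j ≤ κ * n)
    (hocc : ∀ m < n, u (i + m) = u (j + m)) :
    ∃ U V : List A, V ≠ [] ∧
      IsPrefixSeq u (U ++ wPow V (1 + 1 / (3 * (κ : ℝ) + 1))) ∧
      U.length ≤ κ * n ∧ (n : ℝ) / 4 ≤ (V.length : ℝ) := by
  set d := j - i with hdd
  have hd1 : 1 ≤ d := by omega
  have hjd : j = i + d := by omega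
  -- periodicity lemma
  have per : ∀ t m, m + t * d < n + d → u (i + (m + t * d)) = u (i + m) := by
    intro t
    induction t with
    | zero => intro m _; simp
    | succ t ih =>
      intro m hm
      rw [show (t + 1) * d = t * d + d from by ring] at hm ⊢
      generalize hs : t * d = s at ih hm ⊢
      have hmt : m + s < n := by omega
      have e1 : i + (m + (s + d)) = j + (m + s) := by omega
      rw [e1, ← hocc _ hmt]
      exact ih m (by omega)
  -- arithmetic setup
  have h4d : 0 < 4 * d := by omega
  have hmod := Nat.div_add_mod (n - 1) (4 * d)
  have hrlt : (n - 1) % (4 * d) < 4 * d := Nat.mod_lt _ h4d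
  set r := (n - 1) % (4 * d) with hr
  set q := (n - 1) / (4 * d) with hq
  -- L := d*q + d
  have hmodQ : 4 * (d * q) + r = n - 1 := by
    rw [show 4 * (d * q) = 4 * d * q from by ring]; exact hmod
  set L := d * q + d with hL
  have hLd : (q + 1) * d = L := by rw [hL]; ring
  have perL : ∀ m, m + L < n + d → u (i + (m + L)) = u (i + m) := by
    intro m hm
    have h := per (q + 1) m (by rw [hLd]; exact hm)
    rwa [hLd] at h
  clear per hmod
  generalize hQ : d * q = Q at hmodQ hL
  have hdκ : d ≤ κ * n := le_trans (by omega) hj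
  have h4L : n ≤ 4 * L := by omega
  have hQn : Q ≤ n := by omega
  have hLpos : 0 < L := by omega
  have h3κ : (0:ℝ) < 3 * (κ:ℝ) + 1 := by positivity
  -- the exponent amount
  set e := ⌈(L:ℝ) / (3 * (κ:ℝ) + 1)⌉₊ with he
  have hEreal : (L:ℝ) / (3 * (κ:ℝ) + 1) ≤ ((n - Q : ℕ) : ℝ) := by
    have h1 : ((n - Q : ℕ) : ℝ) = (n:ℝ) - (Q:ℝ) := by
      push_cast [Nat.cast_sub hQn]; ring
    rw [h1, div_le_iff₀ h3κ]
    have hQr : 4 * (Q:ℝ) ≤ (n:ℝ) - 1 := by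
      have h2 : (4 * Q + 1 : ℕ) ≤ n := by omega
      have h3 : 4 * (Q:ℝ) + 1 ≤ (n:ℝ) := by exact_mod_cast h2
      linarith
    have hLr : (L:ℝ) = (Q:ℝ) + (d:ℝ) := by exact_mod_cast hL
    have hdr : (d:ℝ) ≤ (κ:ℝ) * (n:ℝ) := by exact_mod_cast hdκ
    have hκr : (2:ℝ) ≤ (κ:ℝ) := by exact_mod_cast hκ
    have hnr : (1:ℝ) ≤ (n:ℝ) := by exact_mod_cast hn
    have hQ0 : (0:ℝ) ≤ (Q:ℝ) := by positivity
    nlinarith [mul_le_mul_of_nonneg_left hQr (show (0:ℝ) ≤ 3 * (κ:ℝ) + 2 by linarith),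
      mul_le_mul_of_nonneg_left hnr (show (0:ℝ) ≤ (κ:ℝ) by linarith),
      mul_nonneg (show (0:ℝ) ≤ (κ:ℝ) by linarith) (show (0:ℝ) ≤ (n:ℝ) by linarith)]
  have heQ : e ≤ n - Q := Nat.ceil_le.mpr hEreal
  have heL : e ≤ L := Nat.ceil_le.mpr (by
    calc (L:ℝ) / (3 * (κ:ℝ) + 1) ≤ (L:ℝ) := by
          apply div_le_self (by positivity)
          have : (0:ℝ) ≤ (κ:ℝ) := Nat.cast_nonneg κ
          linarith
      _ = ((L:ℕ):ℝ) := rfl)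
  -- the words
  set Ul : List A := (List.range i).map u with hUl
  set Vl : List A := (List.range L).map (fun m => u (i + m)) with hVl
  have hVlen : Vl.length = L := by simp [hVl]
  have hfloor : ⌊(1:ℝ) + 1 / (3 * (κ:ℝ) + 1)⌋₊ = 1 := by
    have h1 : 1 / (3 * (κ:ℝ) + 1) < 1 := by
      rw [div_lt_one h3κ]
      have : (2:ℝ) ≤ (κ:ℝ) := by exact_mod_cast hκ
      linarith
    have h0 : (0:ℝ) < 1 / (3 * (κ:ℝ) + 1) := by positivity
    rw [Nat.floor_eq_iff (by linarith)]
    constructor <;> push_cast <;> linarith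
  have hwpow : wPow Vl (1 + 1 / (3 * (κ:ℝ) + 1)) = Vl ++ Vl.take e := by
    unfold wPow
    rw [hfloor]
    congr 1
    · simp
    · congr 1
      rw [he, hVlen]
      congr 1
      push_cast
      ring
  have hlist : Ul ++ (Vl ++ Vl.take e) = (List.range (i + (L + e))).map u := by
    simp only [List.range_add, List.map_append, List.map_map]
    congr 1
    congr 1
    · rw [hVl, ← List.map_take, List.take_range, min_eq_left heL]
      apply List.map_congr_left
      intro m hm
      have hme : m < e := by simpa using hm
      have := perL m (by omega)
      simp only [Function.comp]
      rw [show i + (L + m) = i + (m + L) from by omega, this]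
  refine ⟨Ul, Vl, ?_, ?_, ?_, ?_⟩
  · intro h
    have := congrArg List.length h
    rw [hVlen] at this
    simp at this
    omega
  · rw [hwpow, hlist]
    intro m hm
    simp only [List.length_map, List.length_range] at hm
    rw [List.getD_eq_getElem _ _ (by simpa using hm)]
    simp
  · simp [hUl]; omega
  · rw [hVlen]
    have : (n:ℝ) ≤ 4 * (L:ℝ) := by exact_mod_cast h4L
    linarith
end
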